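/- Let (t, d) be a labeled plane tree, list its vertices in lexicographic order as v_0 = ∅, v_1, …, v_{|t|−1} with v_{|t|} := v_0, and set α_t = 2 + max over 0 ≤ i < |t| of dist_t(v_i, v_{i+1}). Then sup over 0 ≤ s ≤ 1 of |Z_t(s) − S_t(φ_t(s))| ≤ max{ |ℓ(u) − ℓ(v)| : u, v ∈ V(t), dist_t(u, v) ≤ α_t }. -/

import Mathlib

open MeasureTheory Filter Topology
open scoped ENNReal NNReal Classical

noncomputable section

namespace TreeSym

/-- Ulam–Harris words over the positive integers. -/
abbrev Vertex : Type := List ℕ+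

instance : MeasurableSpace Vertex := ⊤
instance : MeasurableSpace (Finset Vertex) := ⊤

/-- A finite set of Ulam–Harris words is (the vertex set of) a rooted plane tree if it contains
the empty word, is prefix-closed, and is closed under decreasing the last letter. -/
def IsPlaneTreeSet (t : Finset Vertex) : Prop :=
  ([] : Vertex) ∈ t ∧
  (∀ v ∈ t, ∀ u : Vertex, u <+: v → u ∈ t) ∧
  (∀ v : Vertex, ∀ i j : ℕ+, v ++ [i] ∈ t → j ≤ i → v ++ [j] ∈ t)

/-- The number of children of `v` in the vertex set `t`. -/
def nChild (t : Finset Vertex) (v : Vertex) : ℕ :=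
  (t.filter fun w => ∃ i : ℕ+, w = v ++ [i]).card

/-- Length of the longest common prefix of two words. -/
def lcpLen : Vertex → Vertex → ℕ
  | a :: u, b :: v => if a = b then lcpLen u v + 1 else 0
  | _, _ => 0

/-- The graph distance between two vertices of a plane tree. -/
def treeDist (u v : Vertex) : ℕ := u.length + v.length - 2 * lcpLen u v

/-- History of the contour exploration of the plane tree with vertex set `t`
(most recently visited vertex first). -/
def contourHist (t : Finset Vertex) : ℕ → List Vertex
  | 0 => [([] : Vertex)]
  | n + 1 =>
    let h := contourHist t n
    let cur := h.headI
    if (∃ m : ℕ, cur ++ [m.succPNat] ∈ t ∧ cur ++ [m.succPNat] ∉ h) then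
      (cur ++ [(sInf {m : ℕ | cur ++ [m.succPNat] ∈ t ∧ cur ++ [m.succPNat] ∉ h}).succPNat]) :: h
    else
      cur.dropLast :: h

/-- The contour exploration `θ_t`. -/
def theta (t : Finset Vertex) (i : ℕ) : Vertex := (contourHist t i).headI

/-- Piecewise linear interpolation: `interpFun n f (i/n) = f i` for `0 ≤ i ≤ n`, linear in
between. -/
def interpFun (n : ℕ) (f : ℕ → ℝ) (s : ℝ) : ℝ :=
  f 0 + ∑ k ∈ Finset.range n, (f (k + 1) - f k) * max 0 (min 1 (s * n - k))

lemma continuous_interpFun (n : ℕ) (f : ℕ → ℝ) : Continuous (interpFun n f) := by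
  unfold interpFun
  refine continuous_const.add (continuous_finset_sum _ fun k _ => continuous_const.mul ?_)
  exact continuous_const.max (continuous_const.min
    ((continuous_id.mul continuous_const).sub continuous_const))

/-- Piecewise linear interpolation, as a continuous map on `[0,1]`. -/
def interpMap (n : ℕ) (f : ℕ → ℝ) : C(unitInterval, ℝ) :=
  ⟨fun s => interpFun n f s, (continuous_interpFun n f).comp continuous_subtype_val⟩

/-- A multitype labeled plane tree with type space `S`: a finite set of Ulam–Harris words,
together with a type and a displacement (the label increment along the edge to the parent)
attached to each word. -/
structure MTree (S : Type*) where
  verts : Finset Vertex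
  type : Vertex → S
  disp : Vertex → ℝ

/-- The underlying vertex set is a plane tree. -/
def MTree.IsPlaneTree {S : Type*} (T : MTree S) : Prop := IsPlaneTreeSet T.verts

instance {S : Type*} [MeasurableSpace S] : MeasurableSpace (MTree S) :=
  MeasurableSpace.comap (fun T => (T.verts, T.type, T.disp)) inferInstance

/-- The label of a vertex: the sum of the displacements along the path from the root. -/
def labelOf {S : Type*} (T : MTree S) (v : Vertex) : ℝ :=
  ∑ j ∈ Finset.range v.length, T.disp (v.take (j + 1))

/-- The contour process, as a function on `ℝ`. -/
def contourFun {S : Type*} (T : MTree S) (s : ℝ) : ℝ :=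
  interpFun (2 * T.verts.card - 2) (fun i => ((theta T.verts i).length : ℝ)) s

/-- The label process, as a function on `ℝ`. -/
def labelFun {S : Type*} (T : MTree S) (s : ℝ) : ℝ :=
  interpFun (2 * T.verts.card - 2) (fun i => labelOf T (theta T.verts i)) s

/-- The contour process `C` of a tree, as a continuous map on `[0,1]`. -/
def contourProcess {S : Type*} (T : MTree S) : C(unitInterval, ℝ) :=
  interpMap (2 * T.verts.card - 2) fun i => ((theta T.verts i).length : ℝ)

/-- The label process `Z` of a labeled tree, as a continuous map on `[0,1]`. -/
def labelProcess {S : Type*} (T : MTree S) : C(unitInterval, ℝ) :=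
  interpMap (2 * T.verts.card - 2) fun i => labelOf T (theta T.verts i)

/-- The process `Λ^{(q)}` counting visited vertices of type `q` along the contour. -/
def lambdaProcess {S : Type*} (q : S) (T : MTree S) : C(unitInterval, ℝ) :=
  interpMap (2 * T.verts.card - 2) fun i =>
    (((Finset.range i).filter fun j => T.type (theta T.verts j) = q).card : ℝ)

/-! ### Symmetrization -/

/-- A vector of permutations, one for each potential vertex. -/
abbrev PermVec : Type := Vertex → Equiv.Perm ℕ+

/-- Relabel a word according to a permutation vector, the permutation used at each level being
the one attached to the (original) prefix. -/
def permWordAux (σ : PermVec) : Vertex → Vertex → Vertex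
  | _, [] => []
  | p, i :: rest => σ p i :: permWordAux σ (p ++ [i]) rest

def permWord (σ : PermVec) (v : Vertex) : Vertex := permWordAux σ [] v

/-- The inverse relabeling. -/
def invWordAux (σ : PermVec) : Vertex → Vertex → Vertex
  | _, [] => []
  | p, j :: rest => (σ p)⁻¹ j :: invWordAux σ (p ++ [(σ p)⁻¹ j]) rest

def invWord (σ : PermVec) (w : Vertex) : Vertex := invWordAux σ [] w

/-- Apply a permutation vector to a labeled multitype tree: children are reordered at every
vertex, types and displacements following their vertices and edges. -/
def permApply {S : Type*} (σ : PermVec) (T : MTree S) : MTree S :=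
  ⟨T.verts.image (permWord σ), fun w => T.type (invWord σ w), fun w => T.disp (invWord σ w)⟩

/-- The set `P_t` of admissible permutation vectors for `T`: at a vertex with `k` children the
permutation fixes everything above `k` and permutes `{1,…,k}`; away from the tree it is the
identity. -/
def PermSet {S : Type*} (T : MTree S) : Set PermVec :=
  {σ | (∀ v ∈ T.verts,
          (∀ i : ℕ+, (i : ℕ) ≤ nChild T.verts v → ((σ v i : ℕ) ≤ nChild T.verts v)) ∧
          (∀ i : ℕ+, nChild T.verts v < (i : ℕ) → σ v i = i)) ∧
        ∀ v ∉ T.verts, σ v = 1}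

/-- The law of the symmetrization of the (deterministic) tree `T`: the uniform average of the
point masses at `σ(T)`, `σ ∈ P_T`. -/
def symKernel {S : Type*} [MeasurableSpace S] (T : MTree S) : Measure (MTree S) :=
  ((PermSet T).ncard : ℝ≥0∞)⁻¹ •
    Measure.sum (fun σ : ↥(PermSet T) => Measure.dirac (permApply (σ : PermVec) T))

/-- The symmetrization `ν^sym` of a law `ν` on labeled multitype plane trees. -/
def symLaw {S : Type*} [MeasurableSpace S] (ν : Measure (MTree S)) : Measure (MTree S) :=
  ν.bind symKernel

/-- A law is symmetric if it is equal to its symmetrization. -/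
def IsSymmetricLaw {S : Type*} [MeasurableSpace S] (ν : Measure (MTree S)) : Prop :=
  symLaw ν = ν

/-! ### Valid laws -/

/-- Forget the displacements of a labeled tree. -/
def shape {S : Type*} (T : MTree S) : MTree S := ⟨T.verts, T.type, fun _ => 0⟩

/-- The vector of displacements from `v` to its (first `k`) children. -/
def dispVecAt {S : Type*} (T : MTree S) (v : Vertex) (k : ℕ) : Fin k → ℝ :=
  fun i => T.disp (v ++ [(i : ℕ).succPNat])

/-- The child type vector of `v` (with `k` children). -/
def ctypeAt {S : Type*} (T : MTree S) (v : Vertex) (k : ℕ) : Fin k → S :=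
  fun i => T.type (v ++ [(i : ℕ).succPNat])

/-- A family of displacement distributions: for each parent type and each child type vector of
each length `k`, a measure on `ℝ^k`. -/
abbrev DispFamily (S : Type*) : Type _ :=
  S → (k : ℕ) → (Fin k → S) → Measure (Fin k → ℝ)

/-- `ν` has displacement family `π`: conditionally on the underlying typed tree, the displacement
vectors at the vertices are independent, with laws given by `π` evaluated at the type of a vertex
and its child type vector. -/
def HasDispFamily {S : Type*} [MeasurableSpace S] (ν : Measure (MTree S))
    (π : DispFamily S) : Prop :=
  (∀ r k s, IsProbabilityMeasure (π r k s)) ∧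
  ∀ t : MTree S, ∀ B : (v : Vertex) → Set (Fin (nChild t.verts v) → ℝ),
    (∀ v, MeasurableSet (B v)) →
    ν {T | shape T = shape t ∧ ∀ v ∈ t.verts, dispVecAt T v (nChild t.verts v) ∈ B v}
      = ν {T | shape T = shape t}
        * ∏ v ∈ t.verts, π (t.type v) (nChild t.verts v) (ctypeAt t v (nChild t.verts v)) (B v)

/-- A law on labeled multitype plane trees is valid if it is carried by plane trees, the law of
the underlying typed plane tree is symmetric, and the displacements admit a displacement family
as above. -/
def IsValidLaw {S : Type*} [MeasurableSpace S] (ν : Measure (MTree S)) : Prop :=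
  ν {T | ¬ T.IsPlaneTree} = 0 ∧ IsSymmetricLaw (ν.map shape) ∧ ∃ π : DispFamily S, HasDispFamily ν π

/-! ### Convergence in distribution -/

/-- Convergence in distribution of a sequence of random elements (defined on possibly different
probability spaces) towards a limiting random element: the expectations of every bounded
continuous functional converge. -/
def TendstoInDist {Ω : ℕ → Type*} [∀ n, MeasurableSpace (Ω n)]
    (P : ∀ n, Measure (Ω n)) {E : Type*} [TopologicalSpace E] (X : ∀ n, Ω n → E)
    {Ω₀ : Type*} [MeasurableSpace Ω₀] (P₀ : Measure Ω₀) (Y : Ω₀ → E) : Prop :=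
  ∀ f : BoundedContinuousFunction E ℝ,
    Tendsto (fun n => ∫ ω, f (X n ω) ∂(P n)) atTop (𝓝 (∫ ω, f (Y ω) ∂P₀))

/-- Tightness of a family of laws of random elements of a topological space. -/
def TightSeq {E : Type*} [TopologicalSpace E] {Ω : ℕ → Type*} [∀ n, MeasurableSpace (Ω n)]
    (P : ∀ n, Measure (Ω n)) (X : ∀ n, Ω n → E) : Prop :=
  ∀ ε : ℝ≥0∞, 0 < ε → ∃ K : Set E, IsCompact K ∧ ∀ n, P n {ω | X n ω ∉ K} ≤ ε

/-! ### Galton–Watson laws -/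

instance {S : Type*} [MeasurableSpace S] : MeasurableSpace (List S) := ⊤

/-- The child type vector of `v`, as a list. -/
def ctypeList {S : Type*} (T : MTree S) (v : Vertex) : List S :=
  (List.range (nChild T.verts v)).map fun m => T.type (v ++ [m.succPNat])

/-- `ν` is the law of a multitype Galton–Watson tree with offspring distributions `p`:
the `p s` are permutation-invariant probability measures on finite type sequences, and the
probability that the typed tree equals a given finite plane tree `t` is the product over the
vertices of `t` of the offspring probabilities of the child type vectors (times the probability
of the root type). -/
def IsGWLaw {S : Type*} [MeasurableSpace S] (ν : Measure (MTree S))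
    (p : S → Measure (List S)) : Prop :=
  (∀ s, IsProbabilityMeasure (p s)) ∧
  (∀ s : S, ∀ l l' : List S, l.Perm l' → p s {l} = p s {l'}) ∧
  ∀ t : MTree S, t.IsPlaneTree →
    ν {T | T.verts = t.verts ∧ ∀ v ∈ t.verts, T.type v = t.type v}
      = ν {T | T.type [] = t.type []} * ∏ v ∈ t.verts, p (t.type v) {ctypeList t v}

/-- A tree is normalized if its type and displacement functions take default values off the
vertex set, and (for unlabeled trees) all displacements vanish. -/
def Normalized {S : Type*} (s₀ : S) (T : MTree S) : Prop :=
  (∀ v ∉ T.verts, T.type v = s₀) ∧ T.disp = fun _ => 0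

/-! ### Displacement families: symmetrization and centering -/

/-- The symmetrized displacement family `π^{sym}` defined by
`π^{u,sym}_s(B) = (1/k!) ∑_{σ ∈ 𝔖_k} π^u_{σ(s)}(σ(B))`. -/
def symFamily {S : Type*} (π : DispFamily S) : DispFamily S := fun r k s =>
  ((Nat.factorial k : ℝ≥0∞))⁻¹ •
    ∑ σ : Equiv.Perm (Fin k),
      (π r k fun j => s (σ.symm j)).map fun x : Fin k → ℝ => fun j => x (σ j)

/-- A displacement family is locally centered if every coordinate of every displacement
distribution has mean zero. -/
def LocallyCentered {S : Type*} (π : DispFamily S) : Prop :=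
  ∀ (r : S) (k : ℕ) (s : Fin k → S) (i : Fin k), (∫ x, x i ∂(π r k s)) = 0

/-- A displacement family is centered if, for every `k`, every parent type `r` and every vector
`z` of type counts summing to `k`, the sum over all ordered child type sequences with counts `z`
of the total mean displacement is zero. -/
def Centered {S : Type*} (π : DispFamily S) : Prop :=
  ∀ (k : ℕ) (r : S) (z : S →₀ ℕ), (z.sum fun _ n => n) = k →
    (∑ᶠ s ∈ {s : Fin k → S | ∀ x : S,
        ((Finset.univ.filter fun i => s i = x).card = z x)},
      ∑ i : Fin k, ∫ x, x i ∂(π r k s)) = 0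

/-! ### Subtrees spanned by finitely many vertices -/

/-- The vertex set of the subtree spanned by the vertices `r i` and their ancestors. -/
def spanVerts {k : ℕ} (r : Fin k → Vertex) : Finset Vertex :=
  insert ([] : Vertex) (Finset.univ.biUnion fun i => ((r i).inits).toFinset)

/-- The rank of the child index `i` of `p` among the child indices present in `s`. -/
def childRank (s : Finset Vertex) (p : Vertex) (i : ℕ+) : ℕ+ :=
  ((s.filter fun w => ∃ j : ℕ+, j ≤ i ∧ w = p ++ [j]).card).toPNat'

def reindexAux (s : Finset Vertex) : Vertex → Vertex → Vertex
  | _, [] => []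
  | p, i :: rest => childRank s p i :: reindexAux s (p ++ [i]) rest

/-- The Ulam–Harris label, in the plane tree with vertex set `s`, of the node corresponding to
the vertex `v ∈ s`: children are relabeled consecutively, preserving their order. -/
def reindex (s : Finset Vertex) (v : Vertex) : Vertex := reindexAux s [] v

/-- The set of child indices of `p` present in `s`. -/
def childIdxs (s : Finset Vertex) (p : Vertex) : Finset ℕ+ :=
  (s.filter fun w => ∃ i : ℕ+, w = p ++ [i]).image fun w => w.getLastD 1

/-- The `m`-th smallest child index of `p` present in `s`. -/
def nthChildIndex (s : Finset Vertex) (p : Vertex) (m : ℕ+) : ℕ+ :=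
  ((childIdxs s p).sort (· ≤ ·)).getD ((m : ℕ) - 1) 1

def unIndexAux (s : Finset Vertex) : Vertex → Vertex → Vertex
  | _, [] => []
  | p, m :: rest =>
      nthChildIndex s p m :: unIndexAux s (p ++ [nthChildIndex s p m]) rest

/-- The inverse of `reindex s`. -/
def unIndex (s : Finset Vertex) (w : Vertex) : Vertex := unIndexAux s [] w

/-- The labeled subtree of `T` with vertex set `s ⊆ T.verts`, viewed as a plane tree (with the
plane structure, the types and the displacements inherited from `T`). -/
def spanTree {S : Type*} (T : MTree S) (s : Finset Vertex) : MTree S :=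
  ⟨s.image (reindex s), fun w => T.type (unIndex s w), fun w => T.disp (unIndex s w)⟩

/-- The labeled subtree of `T` with vertex set `s`, with the displacements on child edges of
branchpoints replaced by `0` (the modified labeling `d⟨·⟩`). -/
def spanTreeMod {S : Type*} (T : MTree S) (s : Finset Vertex) : MTree S :=
  ⟨(spanTree T s).verts, (spanTree T s).type,
    fun w => if nChild (spanTree T s).verts w.dropLast = 1 then (spanTree T s).disp w else 0⟩

/-- `R` is a uniform sample of `k` vertices from the random labeled tree `X`: conditionally on
`X`, the coordinates of `R` are independent and uniformly distributed on the vertex set of `X`. -/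
def UniformSample {Ω : Type*} [MeasurableSpace Ω] (P : Measure Ω) {S : Type*} [MeasurableSpace S]
    (X : Ω → MTree S) {k : ℕ} (R : Ω → Fin k → Vertex) : Prop :=
  ∀ A : Set (MTree S), MeasurableSet A → ∀ r : Fin k → Vertex,
    P {ω | X ω ∈ A ∧ R ω = r}
      = ∫⁻ ω in {ω | X ω ∈ A},
          (if ∀ i, r i ∈ (X ω).verts then (((X ω).verts.card : ℝ≥0∞) ^ k)⁻¹ else 0) ∂P

/-! ### Lexicographic enumeration, height process -/

/-- The vertices of `t` in lexicographic order. -/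
def lexEnum (t : Finset Vertex) : List Vertex := t.sort (· ≤ ·)

/-- The `i`-th vertex in lexicographic order (`v_{|t|} = v_0` by convention, since `v_0` is the
root `[]`, which is also the default value). -/
def lexVertex (t : Finset Vertex) (i : ℕ) : Vertex := (lexEnum t).getD i []

/-- The height process `H_t`, as a function on `ℝ`. -/
def heightFun {S : Type*} (T : MTree S) (s : ℝ) : ℝ :=
  interpFun T.verts.card (fun i => ((lexVertex T.verts i).length : ℝ)) s

/-- The lexicographic label process `S_t`, as a function on `ℝ`. -/
def lexLabelFun {S : Type*} (T : MTree S) (s : ℝ) : ℝ :=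
  interpFun T.verts.card (fun i => labelOf T (lexVertex T.verts i)) s

/-- The height process `H_t`, as a continuous map on `[0,1]`. -/
def heightProcess {S : Type*} (T : MTree S) : C(unitInterval, ℝ) :=
  interpMap T.verts.card fun i => ((lexVertex T.verts i).length : ℝ)

/-- The lexicographic label process `S_t`, as a continuous map on `[0,1]`. -/
def lexLabelProcess {S : Type*} (T : MTree S) : C(unitInterval, ℝ) :=
  interpMap T.verts.card fun i => labelOf T (lexVertex T.verts i)

/-- `j_t(i) = 2i - h(v_i)` for `i < |t|`, and `j_t(i) = 2|t| - 2` otherwise. -/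
def jIdx (t : Finset Vertex) (i : ℕ) : ℕ :=
  if i < t.card then 2 * i - (lexVertex t i).length else 2 * t.card - 2

/-- `φ_t(s) = |t|⁻¹ · sup {i ≤ |t| : j_t(i) ≤ s(2|t|-2)}`. -/
def phi (t : Finset Vertex) (s : ℝ) : ℝ :=
  ((sSup {i : ℕ | i ≤ t.card ∧ (jIdx t i : ℝ) ≤ s * (2 * t.card - 2)} : ℕ) : ℝ) / t.card

/-- The increasing reordering of the finite vector `f`. -/
def sortFun {k : ℕ} (f : Fin k → ℝ) (i : ℕ) : ℝ :=
  ((List.ofFn f).insertionSort (· ≤ ·)).getD i 0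

instance : MeasurableSpace C(unitInterval, ℝ) := borel _


/-! ### Lex order toolkit -/

lemma vnot_lt_nil (u : Vertex) : ¬ u < ([] : Vertex) := fun h => by cases h

lemma vle_nil_iff {u : Vertex} : u ≤ ([] : Vertex) ↔ u = [] :=
  ⟨fun h => le_antisymm h (by cases u with | nil => exact le_rfl | cons a r => exact le_of_lt List.Lex.nil), fun h => h ▸ le_rfl⟩

lemma cons_lt_cons_iff' {a b : ℕ+} {u v : List ℕ+} :
    (a :: u : Vertex) < b :: v ↔ a < b ∨ (a = b ∧ u < v) := by
  constructor
  · intro h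
    cases h with
    | cons h => exact Or.inr ⟨rfl, h⟩
    | rel h => exact Or.inl h
  · rintro (h | ⟨rfl, h⟩)
    · exact List.Lex.rel h
    · exact List.Lex.cons h

lemma append_lt_append_iff' (p : Vertex) {u v : Vertex} : p ++ u < p ++ v ↔ u < v := by
  induction p with
  | nil => simp
  | cons a p ih => simpa [cons_lt_cons_iff'] using ih

lemma append_le_append_iff' (p : Vertex) {u v : Vertex} : p ++ u ≤ p ++ v ↔ u ≤ v := by
  rw [le_iff_lt_or_eq, le_iff_lt_or_eq, append_lt_append_iff',
    List.append_right_inj]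

lemma vprefix_le {u v : Vertex} (h : u <+: v) : u ≤ v := by
  obtain ⟨r, rfl⟩ := h
  calc u = u ++ [] := by simp
  _ ≤ u ++ r := (append_le_append_iff' u).2 (by cases r with | nil => exact le_rfl | cons a r => exact le_of_lt List.Lex.nil)

lemma vprefix_lt {u v : Vertex} (h : u <+: v) (hne : u ≠ v) : u < v :=
  lt_of_le_of_ne (vprefix_le h) hne

lemma lt_dec {u w : Vertex} (h : u < w) :
    (∃ r : Vertex, r ≠ [] ∧ w = u ++ r) ∨
    ∃ (p : Vertex) (x y : ℕ+) (r s : Vertex), x < y ∧ u = p ++ x :: r ∧ w = p ++ y :: s := by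
  induction u generalizing w with
  | nil =>
    cases w with
    | nil => exact absurd h (lt_irrefl _)
    | cons b w => exact Or.inl ⟨b :: w, by simp, by simp⟩
  | cons a u ih =>
    cases w with
    | nil => exact absurd h (vnot_lt_nil _)
    | cons b w =>
      rcases cons_lt_cons_iff'.1 h with hab | ⟨rfl, huw⟩
      · exact Or.inr ⟨[], a, b, u, w, hab, rfl, rfl⟩
      · rcases ih huw with ⟨r, hr, rfl⟩ | ⟨p, x, y, r, s, hxy, rfl, rfl⟩
        · exact Or.inl ⟨r, hr, rfl⟩
        · exact Or.inr ⟨a :: p, x, y, r, s, hxy, rfl, rfl⟩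

/-! ### lcpLen / treeDist -/

lemma lcpLen_nil_left (v : Vertex) : lcpLen [] v = 0 := by cases v <;> rfl

lemma lcpLen_nil_right (v : Vertex) : lcpLen v [] = 0 := by cases v <;> rfl

lemma lcpLen_cons (a b : ℕ+) (u v : List ℕ+) :
    lcpLen (a :: u) (b :: v) = if a = b then lcpLen u v + 1 else 0 := rfl

lemma lcpLen_le_left : ∀ u v : Vertex, lcpLen u v ≤ u.length
  | [], v => by simp [lcpLen_nil_left]
  | a :: u, [] => by simp [lcpLen_nil_right]
  | a :: u, b :: v => by
    rw [lcpLen_cons]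
    split
    · simpa using lcpLen_le_left u v
    · simp

lemma lcpLen_comm : ∀ u v : Vertex, lcpLen u v = lcpLen v u
  | [], v => by simp [lcpLen_nil_left, lcpLen_nil_right]
  | a :: u, [] => by simp [lcpLen_nil_left, lcpLen_nil_right]
  | a :: u, b :: v => by
    rw [lcpLen_cons, lcpLen_cons, lcpLen_comm u v]
    by_cases h : a = b
    · simp [h]
    · simp [h, Ne.symm h]

lemma lcpLen_le_right (u v : Vertex) : lcpLen u v ≤ v.length := by
  rw [lcpLen_comm]; exact lcpLen_le_left v u

lemma lcpLen_self_append : ∀ u r : Vertex, lcpLen u (u ++ r) = u.length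
  | [], r => by simp [lcpLen_nil_left]
  | a :: u, r => by simp [lcpLen_cons, lcpLen_self_append u r]

lemma lcpLen_min : ∀ u w v : Vertex, min (lcpLen u w) (lcpLen w v) ≤ lcpLen u v
  | [], w, v => by simp [lcpLen_nil_left]
  | a :: u, [], v => by simp [lcpLen_nil_right]
  | a :: u, b :: w, [] => by simp [lcpLen_nil_right]
  | a :: u, b :: w, c :: v => by
    rw [lcpLen_cons, lcpLen_cons, lcpLen_cons]
    by_cases hab : a = b
    · by_cases hbc : b = c
      · subst hab; subst hbc
        simp only [if_pos rfl, if_true]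
        have := lcpLen_min u w v
        omega
      · subst hab
        simp [hbc]
    · simp [hab]

lemma treeDist_self (u : Vertex) : treeDist u u = 0 := by
  have := lcpLen_self_append u []
  simp only [List.append_nil] at this
  simp [treeDist, this, Nat.mul_comm]
  omega

lemma treeDist_comm (u v : Vertex) : treeDist u v = treeDist v u := by
  simp [treeDist, lcpLen_comm u v]; omega

lemma treeDist_triangle (u w v : Vertex) : treeDist u v ≤ treeDist u w + treeDist w v := by
  have h1 := lcpLen_le_left u w
  have h2 := lcpLen_le_right u w
  have h3 := lcpLen_le_left w v
  have h4 := lcpLen_le_right w v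
  have h5 := lcpLen_le_left u v
  have h6 := lcpLen_le_right u v
  have h7 := lcpLen_min u w v
  simp only [treeDist] at *
  omega

lemma treeDist_append_single (v : Vertex) (x : ℕ+) : treeDist v (v ++ [x]) = 1 := by
  simp [treeDist, lcpLen_self_append v [x]]
  omega

lemma treeDist_dropLast (v : Vertex) : treeDist v v.dropLast ≤ 1 := by
  rcases List.eq_nil_or_concat v with rfl | ⟨q, x, rfl⟩
  · simp [treeDist_self]
  · rw [List.concat_eq_append, List.dropLast_concat, treeDist_comm, treeDist_append_single]

lemma treeDist_nil (u : Vertex) : treeDist u [] = u.length := by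
  simp [treeDist, lcpLen_nil_right]

lemma lcpLen_prefix {p u : Vertex} (h : p <+: u) : lcpLen p u = p.length := by
  obtain ⟨r, hr⟩ := h
  rw [← hr]; exact lcpLen_self_append p r

lemma treeDist_take (u : Vertex) (k : ℕ) : treeDist u (u.take k) ≤ u.length - k := by
  have h : lcpLen (u.take k) u = (u.take k).length := lcpLen_prefix (List.take_prefix k u)
  rw [treeDist_comm]
  simp only [treeDist, h]
  have : (u.take k).length = min k u.length := List.length_take
  omega

/-! ### Contour exploration basics -/

lemma contourHist_ne_nil (t : Finset Vertex) (m : ℕ) : contourHist t m ≠ [] := by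
  cases m with
  | zero => simp [contourHist]
  | succ m =>
    rw [contourHist]
    split <;> simp

lemma contourHist_succ_pos {t : Finset Vertex} {m : ℕ}
    (h : ∃ k : ℕ, theta t m ++ [k.succPNat] ∈ t ∧
      theta t m ++ [k.succPNat] ∉ contourHist t m) :
    contourHist t (m + 1) =
      (theta t m ++ [(sInf {k : ℕ | theta t m ++ [k.succPNat] ∈ t ∧
        theta t m ++ [k.succPNat] ∉ contourHist t m}).succPNat]) :: contourHist t m := by
  rw [contourHist]
  simp only [theta] at h ⊢
  rw [if_pos h]

lemma contourHist_succ_neg {t : Finset Vertex} {m : ℕ}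
    (h : ¬ ∃ k : ℕ, theta t m ++ [k.succPNat] ∈ t ∧
      theta t m ++ [k.succPNat] ∉ contourHist t m) :
    contourHist t (m + 1) = (theta t m).dropLast :: contourHist t m := by
  rw [contourHist]
  simp only [theta] at h ⊢
  rw [if_neg h]

lemma theta_succ_cases (t : Finset Vertex) (m : ℕ) :
    theta t (m + 1) = (theta t m).dropLast ∨ ∃ x : ℕ+, theta t (m + 1) = theta t m ++ [x] := by
  by_cases h : ∃ k : ℕ, theta t m ++ [k.succPNat] ∈ t ∧
      theta t m ++ [k.succPNat] ∉ contourHist t m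
  · right
    exact ⟨_, by rw [theta, contourHist_succ_pos h]; rfl⟩
  · left
    rw [theta, contourHist_succ_neg h]
    rfl

lemma treeDist_theta_succ (t : Finset Vertex) (m : ℕ) :
    treeDist (theta t m) (theta t (m + 1)) ≤ 1 := by
  rcases theta_succ_cases t m with h | ⟨x, h⟩
  · rw [h]; exact treeDist_dropLast _
  · rw [h, treeDist_append_single]

lemma treeDist_theta_le (t : Finset Vertex) {a b : ℕ} (h : a ≤ b) :
    treeDist (theta t a) (theta t b) ≤ b - a := by
  induction b with
  | zero => interval_cases a; simp [treeDist_self]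
  | succ b ih =>
    rcases Nat.lt_or_ge a (b + 1) with hab | hab
    · have h1 := ih (Nat.lt_succ_iff.mp hab)
      have h2 := treeDist_theta_succ t b
      have := treeDist_triangle (theta t a) (theta t b) (theta t (b + 1))
      omega
    · have : a = b + 1 := le_antisymm h hab
      subst this
      simp [treeDist_self]

lemma mem_contourHist_mono {t : Finset Vertex} {m m' : ℕ} (h : m ≤ m') {w : Vertex}
    (hw : w ∈ contourHist t m) : w ∈ contourHist t m' := by
  induction m' with
  | zero => exact (Nat.le_zero.mp h) ▸ hw
  | succ k ih =>
    rcases Nat.lt_or_ge m (k + 1) with h' | h'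
    · have hk := ih (Nat.lt_succ_iff.mp h')
      rw [contourHist]
      split <;> exact List.mem_cons_of_mem _ hk
    · exact (le_antisymm h h') ▸ hw

lemma theta_mem_contourHist (t : Finset Vertex) (m : ℕ) : theta t m ∈ contourHist t m := by
  have h := contourHist_ne_nil t m
  rw [theta]
  cases hh : contourHist t m with
  | nil => exact absurd hh h
  | cons a l => simp

/-! ### Lexicographic enumeration -/

lemma length_lexEnum (t : Finset Vertex) : (lexEnum t).length = t.card :=
  Finset.length_sort _

lemma lexVertex_eq_get {t : Finset Vertex} {i : ℕ} (hi : i < t.card) :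
    lexVertex t i = (lexEnum t).get ⟨i, by rw [length_lexEnum]; exact hi⟩ :=
  by unfold lexVertex; simp [List.getD_eq_getElem?_getD, length_lexEnum, hi]

lemma lexVertex_default {t : Finset Vertex} {i : ℕ} (hi : t.card ≤ i) :
    lexVertex t i = [] :=
  List.getD_eq_default _ _ (by rw [length_lexEnum]; exact hi)

lemma lexVertex_mem {t : Finset Vertex} {i : ℕ} (hi : i < t.card) :
    lexVertex t i ∈ t := by
  rw [lexVertex_eq_get hi]
  have : (lexEnum t).get ⟨i, by rw [length_lexEnum]; exact hi⟩ ∈ lexEnum t :=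
    List.get_mem _ _
  exact (Finset.mem_sort (α := Vertex) (· ≤ ·)).mp this

lemma lexVertex_lt {t : Finset Vertex} {i j : ℕ} (hij : i < j) (hj : j < t.card) :
    lexVertex t i < lexVertex t j := by
  have hi : i < t.card := lt_trans hij hj
  rw [lexVertex_eq_get hi, lexVertex_eq_get hj]
  exact (Finset.sortedLT_sort t).strictMono_get (Fin.mk_lt_mk.mpr hij)

lemma exists_lexVertex {t : Finset Vertex} {w : Vertex} (hw : w ∈ t) :
    ∃ j : ℕ, j < t.card ∧ w = lexVertex t j := by
  rw [← Finset.mem_sort (α := Vertex) (· ≤ ·)] at hw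
  obtain ⟨⟨j, hj⟩, hjw⟩ := List.mem_iff_get.mp hw
  rw [Finset.length_sort] at hj
  refine ⟨j, hj, ?_⟩
  rw [lexVertex_eq_get hj]
  exact hjw.symm

lemma lexVertex_succ_min {t : Finset Vertex} {i : ℕ} {w : Vertex} (hi : i < t.card)
    (hw : w ∈ t) (hlt : lexVertex t i < w) : i + 1 < t.card ∧ lexVertex t (i + 1) ≤ w := by
  obtain ⟨j, hj, rfl⟩ := exists_lexVertex hw
  have hij : i < j := by
    by_contra h
    rcases Nat.lt_or_ge j i with h' | h'
    · exact absurd (lexVertex_lt h' hi) (asymm hlt)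
    · have : j = i := le_antisymm (not_lt.mp h) h'
      subst this
      exact absurd hlt (lt_irrefl _)
  refine ⟨lt_of_le_of_lt hij hj, ?_⟩
  rcases Nat.lt_or_ge (i + 1) j with h' | h'
  · exact le_of_lt (lexVertex_lt h' hj)
  · have : i + 1 = j := le_antisymm hij h'
    subst this
    exact le_rfl

lemma le_lexVertex_max {t : Finset Vertex} {w : Vertex} (hw : w ∈ t) :
    w ≤ lexVertex t (t.card - 1) := by
  obtain ⟨j, hj, rfl⟩ := exists_lexVertex hw
  rcases Nat.lt_or_ge j (t.card - 1) with h | h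
  · exact le_of_lt (lexVertex_lt h (by omega))
  · have : j = t.card - 1 := by omega
    subst this
    exact le_rfl

lemma lexVertex_zero {t : Finset Vertex} (h : ([] : Vertex) ∈ t) :
    lexVertex t 0 = [] := by
  obtain ⟨j, hj, hjw⟩ := exists_lexVertex h
  rcases Nat.eq_zero_or_pos j with rfl | hpos
  · exact hjw.symm
  · have := lexVertex_lt hpos hj
    rw [← hjw] at this
    exact absurd this (vnot_lt_nil _)

lemma lexVertex_length_le {t : Finset Vertex} (ht : IsPlaneTreeSet t) {i : ℕ}
    (hi : i < t.card) : (lexVertex t i).length ≤ i := by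
  set v := lexVertex t i with hv
  have hvm : v ∈ t := lexVertex_mem hi
  have hsub : (Finset.range v.length).image (fun m => v.take m) ⊆
      (Finset.range i).image (lexVertex t) := by
    intro w hw
    simp only [Finset.mem_image, Finset.mem_range] at hw ⊢
    obtain ⟨m, hm, rfl⟩ := hw
    have hwt : v.take m ∈ t := ht.2.1 v hvm _ (List.take_prefix m v)
    have hwlt : v.take m < v := by
      refine vprefix_lt (List.take_prefix m v) ?_
      intro hcontra
      have := congrArg List.length hcontra
      rw [List.length_take] at this
      omega
    obtain ⟨j, hj, hjw⟩ := exists_lexVertex hwt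
    refine ⟨j, ?_, hjw.symm⟩
    by_contra h
    rcases Nat.lt_or_ge i j with h' | h'
    · rw [hjw] at hwlt
      exact absurd (lexVertex_lt h' hj) (asymm hwlt)
    · have : j = i := by omega
      subst this
      rw [hjw] at hwlt
      exact absurd hwlt (lt_irrefl _)
  have hcard1 : ((Finset.range v.length).image (fun m => v.take m)).card = v.length := by
    rw [Finset.card_image_of_injOn, Finset.card_range]
    intro a ha b hb hab
    have := congrArg List.length hab
    simp only [List.length_take, Finset.mem_coe, Finset.mem_range] at this ha hb
    omega
  have := Finset.card_le_card hsub
  have h2 : ((Finset.range i).image (lexVertex t)).card ≤ i :=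
    le_trans Finset.card_image_le (by simp)
  omega

/-! ### Successor structure -/

lemma one_le_cons (a : ℕ+) (r : List ℕ+) : ([1] : Vertex) ≤ a :: r := by
  rcases eq_or_lt_of_le a.one_le with h | h
  · exact vprefix_le ⟨r, by simp [← h]⟩
  · exact le_of_lt (List.Lex.rel h)

lemma first_child_min {v w : Vertex} (h : v < w) : v ++ [1] ≤ w := by
  rcases lt_dec h with ⟨r, hr, rfl⟩ | ⟨p, x, y, r, s, hxy, rfl, rfl⟩
  · cases r with
    | nil => exact absurd rfl hr
    | cons a r => exact (append_le_append_iff' v).2 (one_le_cons a r)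
  · have : p ++ x :: r ++ [1] = p ++ x :: (r ++ [1]) := by simp
    rw [this]
    exact le_of_lt ((append_lt_append_iff' p).2 (List.Lex.rel hxy))

lemma succ_case_child {t : Finset Vertex} (ht : IsPlaneTreeSet t) {i : ℕ} (hi : i < t.card)
    {c : ℕ+} (hc : lexVertex t i ++ [c] ∈ t) :
    i + 1 < t.card ∧ lexVertex t (i + 1) = lexVertex t i ++ [1] := by
  have h1 : lexVertex t i ++ [1] ∈ t := ht.2.2 _ c 1 hc c.one_le
  have hlt : lexVertex t i < lexVertex t i ++ [1] :=
    vprefix_lt ⟨[1], rfl⟩ (by simp)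
  obtain ⟨hcard, hle⟩ := lexVertex_succ_min hi h1 hlt
  refine ⟨hcard, le_antisymm hle (first_child_min (lexVertex_lt (Nat.lt_succ_self i) hcard))⟩

lemma succ_case_nochild {t : Finset Vertex} (ht : IsPlaneTreeSet t) {i : ℕ}
    (hi : i + 1 < t.card) (hnc : ∀ c : ℕ+, lexVertex t i ++ [c] ∉ t) :
    ∃ (p : Vertex) (x y : ℕ+) (r : Vertex), x < y ∧ lexVertex t i = p ++ x :: r ∧
      lexVertex t (i + 1) = p ++ [y] ∧
      ∀ z : ℕ+, z < y → p ++ [z] ∈ t → p ++ [z] ≤ lexVertex t i := by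
  have hi' : i < t.card := Nat.lt_of_succ_lt hi
  have hlt : lexVertex t i < lexVertex t (i + 1) := lexVertex_lt (Nat.lt_succ_self i) hi
  have hmem1 : lexVertex t (i + 1) ∈ t := lexVertex_mem hi
  rcases lt_dec hlt with ⟨r, hr, hext⟩ | ⟨p, x, y, r, s, hxy, hvi, hvi1⟩
  · exfalso
    cases r with
    | nil => exact hr rfl
    | cons a r =>
      have : lexVertex t i ++ [a] ∈ t := by
        refine ht.2.1 _ (hext ▸ hmem1) _ ⟨r, by simp⟩
      exact hnc a this
  · have hq : p ++ [y] ∈ t := ht.2.1 _ (hvi1 ▸ hmem1) _ ⟨s, by simp⟩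
    have hqgt : lexVertex t i < p ++ [y] := by
      rw [hvi]
      exact (append_lt_append_iff' p).2 (List.Lex.rel hxy)
    have hle := (lexVertex_succ_min hi' hq hqgt).2
    have hqle : p ++ [y] ≤ lexVertex t (i + 1) := vprefix_le (hvi1 ▸ ⟨s, by simp⟩)
    have heq : lexVertex t (i + 1) = p ++ [y] := le_antisymm hle hqle
    refine ⟨p, x, y, r, hxy, hvi, heq, ?_⟩
    intro z hz hzt
    by_contra h
    have hzgt : lexVertex t i < p ++ [z] := (not_le.mp h)
    have := (lexVertex_succ_min hi' hzt hzgt).2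
    rw [heq] at this
    have : ([y] : Vertex) ≤ [z] := (append_le_append_iff' p).1 this
    rcases lt_or_eq_of_le this with hlt' | heq'
    · rcases cons_lt_cons_iff'.1 hlt' with h' | ⟨h', _⟩
      · exact absurd h' (asymm hz)
      · exact absurd h' (ne_of_gt hz)
    · have : y = z := by injection heq'
      exact absurd this (ne_of_gt hz)

/-! ### The ascent lemma -/

lemma take_dropLast_take {u : Vertex} {k : ℕ} (hk : k ≤ u.length) :
    (u.take k).dropLast = u.take (k - 1) := by
  rw [List.dropLast_eq_take, List.take_take, List.length_take]
  congr 1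
  omega

lemma ascent {t : Finset Vertex} (ht : IsPlaneTreeSet t) {i m d : ℕ} (hi : i < t.card)
    (hd : d ≤ (lexVertex t i).length)
    (hhead : theta t m = lexVertex t i)
    (hinv : ∀ w, w ∈ contourHist t m ↔ w ∈ t ∧ w ≤ lexVertex t i)
    (hstop : ∀ r, r < d → ∀ c : ℕ+,
      (lexVertex t i).take ((lexVertex t i).length - r) ++ [c] ∈ t →
      (lexVertex t i).take ((lexVertex t i).length - r) ++ [c] ≤ lexVertex t i) :
    ∀ r, r ≤ d →
      theta t (m + r) = (lexVertex t i).take ((lexVertex t i).length - r) ∧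
      (∀ w, w ∈ contourHist t (m + r) ↔ w ∈ t ∧ w ≤ lexVertex t i) := by
  set v := lexVertex t i with hv
  intro r
  induction r with
  | zero =>
    intro _
    simpa using ⟨hhead, hinv⟩
  | succ r ih =>
    intro hr
    obtain ⟨ihh, ihm⟩ := ih (Nat.le_of_succ_le hr)
    have hcur : theta t (m + r) = v.take (v.length - r) := ihh
    have hneg : ¬ ∃ k : ℕ, theta t (m + r) ++ [k.succPNat] ∈ t ∧
        theta t (m + r) ++ [k.succPNat] ∉ contourHist t (m + r) := by
      rintro ⟨k, hk1, hk2⟩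
      apply hk2
      rw [ihm]
      refine ⟨hk1, ?_⟩
      rw [hcur] at hk1 ⊢
      exact hstop r (Nat.lt_of_succ_le hr) _ hk1
    have hstep := contourHist_succ_neg hneg
    have hd1 : theta t (m + (r + 1)) = v.take (v.length - (r + 1)) := by
      show theta t ((m + r) + 1) = _
      rw [theta, hstep, List.headI_cons, hcur, take_dropLast_take (by omega)]
      congr 1
    refine ⟨hd1, ?_⟩
    intro w
    show w ∈ contourHist t ((m + r) + 1) ↔ _
    rw [hstep, List.mem_cons, ihm]
    constructor
    · rintro (rfl | hw)
      · rw [hcur, take_dropLast_take (by omega)]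
        exact ⟨ht.2.1 _ (lexVertex_mem hi) _ (List.take_prefix _ _),
          vprefix_le (List.take_prefix _ _)⟩
      · exact hw
    · exact fun hw => Or.inr hw

/-! ### Main contour invariant -/

lemma succ_mem_iff {t : Finset Vertex} {i : ℕ} (hi1 : i + 1 < t.card) (w : Vertex) :
    w = lexVertex t (i + 1) ∨ (w ∈ t ∧ w ≤ lexVertex t i) ↔
      w ∈ t ∧ w ≤ lexVertex t (i + 1) := by
  have hi : i < t.card := Nat.lt_of_succ_lt hi1
  have hlt : lexVertex t i < lexVertex t (i + 1) := lexVertex_lt (Nat.lt_succ_self i) hi1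
  constructor
  · rintro (rfl | ⟨hw, hle⟩)
    · exact ⟨lexVertex_mem hi1, le_rfl⟩
    · exact ⟨hw, le_trans hle (le_of_lt hlt)⟩
  · rintro ⟨hw, hle⟩
    by_cases h : w = lexVertex t (i + 1)
    · exact Or.inl h
    · refine Or.inr ⟨hw, ?_⟩
      by_contra h'
      have := (lexVertex_succ_min hi hw (not_le.mp h')).2
      exact h (le_antisymm hle this)

lemma jIdx_eq {t : Finset Vertex} {i : ℕ} (hi : i < t.card) :
    jIdx t i = 2 * i - (lexVertex t i).length := if_pos hi

lemma main_inv {t : Finset Vertex} (ht : IsPlaneTreeSet t) :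
    ∀ i, i < t.card →
      theta t (jIdx t i) = lexVertex t i ∧
      (∀ w, w ∈ contourHist t (jIdx t i) ↔ w ∈ t ∧ w ≤ lexVertex t i) ∧
      (∀ j, j ≤ jIdx t i → theta t j ∈ t) := by
  intro i
  induction i with
  | zero =>
    intro hi
    have hz : lexVertex t 0 = [] := lexVertex_zero ht.1
    have hj : jIdx t 0 = 0 := by rw [jIdx_eq hi]; omega
    have hch : contourHist t 0 = [[]] := rfl
    rw [hj, hz]
    refine ⟨?_, ?_, ?_⟩
    · rw [theta, hch]; rfl
    · intro w
      rw [hch]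
      simp only [List.mem_cons, List.not_mem_nil, or_false, vle_nil_iff]
      constructor
      · rintro rfl; exact ⟨ht.1, rfl⟩
      · exact fun h => h.2
    · intro j hj'
      have : j = 0 := Nat.le_zero.mp hj'
      subst this
      rw [theta, hch]
      exact ht.1
  | succ i ihi =>
    intro hi1
    have hi : i < t.card := Nat.lt_of_succ_lt hi1
    obtain ⟨hhead, hinv, hintree⟩ := ihi hi
    set v := lexVertex t i with hv
    have hlen : v.length ≤ i := lexVertex_length_le ht hi
    have hjv : jIdx t i = 2 * i - v.length := jIdx_eq hi
    by_cases hchild : ∃ c : ℕ+, v ++ [c] ∈ t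
    · -- Case A: v has a child; next vertex is v ++ [1]
      obtain ⟨c, hc⟩ := hchild
      obtain ⟨_, hsucc⟩ := succ_case_child ht hi hc
      rw [← hv] at hsucc
      have h1t : v ++ [1] ∈ t := ht.2.2 v c 1 hc c.one_le
      have hlt1 : v < v ++ [1] := vprefix_lt ⟨[1], rfl⟩ (by simp)
      have hpos : ∃ k : ℕ, theta t (jIdx t i) ++ [k.succPNat] ∈ t ∧
          theta t (jIdx t i) ++ [k.succPNat] ∉ contourHist t (jIdx t i) := by
        refine ⟨0, ?_, ?_⟩
        · rw [hhead]; exact h1t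
        · rw [hhead, hinv]
          rintro ⟨-, hle⟩
          exact absurd hle (not_le.mpr hlt1)
      have hinf : sInf {k : ℕ | theta t (jIdx t i) ++ [k.succPNat] ∈ t ∧
          theta t (jIdx t i) ++ [k.succPNat] ∉ contourHist t (jIdx t i)} = 0 := by
        apply Nat.sInf_eq_zero.mpr
        left
        obtain ⟨k, hk⟩ := hpos
        constructor
        · rw [hhead]; exact h1t
        · rw [hhead, hinv]
          rintro ⟨-, hle⟩
          exact absurd hle (not_le.mpr hlt1)
      have hstep := contourHist_succ_pos hpos
      rw [hinf, hhead, (rfl : Nat.succPNat 0 = 1)] at hstep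
      have hj1 : jIdx t (i + 1) = jIdx t i + 1 := by
        rw [jIdx_eq hi1, hsucc, hjv]
        simp only [List.length_append, List.length_cons, List.length_nil]
        omega
      have hth : theta t (jIdx t (i + 1)) = lexVertex t (i + 1) := by
        rw [hj1, theta, hstep, List.headI_cons, hsucc]
        rfl
      refine ⟨hth, ?_, ?_⟩
      · intro w
        rw [hj1, hstep, List.mem_cons, ← succ_mem_iff hi1 w, hsucc, hinv]
        exact Iff.rfl
      · intro j hj'
        rcases Nat.lt_or_ge j (jIdx t (i + 1)) with h' | h'
        · exact hintree j (by omega)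
        · have : j = jIdx t (i + 1) := le_antisymm hj' h'
          subst this
          rw [hth]
          exact lexVertex_mem hi1
    · -- Case B: v has no child
      push_neg at hchild
      obtain ⟨p, x, y, r, hxy, hvi, hvi1, hmin⟩ := succ_case_nochild ht hi1 hchild
      rw [← hv] at hvi hmin
      have hvlen : v.length = p.length + r.length + 1 := by rw [hvi]; simp; omega
      set d : ℕ := v.length - p.length with hd
      have hdpos : 1 ≤ d := by omega
      have htakep : v.take p.length = p := by
        rw [hvi, List.take_append, List.take_of_length_le le_rfl]
        simp
      have htakemid : ∀ k, p.length < k →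
          v.take k = p ++ x :: r.take (k - p.length - 1) := by
        intro k hk
        obtain ⟨e, he⟩ : ∃ e, k - p.length = e + 1 := ⟨k - p.length - 1, by omega⟩
        rw [hvi, List.take_append, List.take_of_length_le (le_of_lt hk), he,
          List.take_succ_cons]
        congr 3
      have hlt1 : v < p ++ [y] := by
        rw [hvi]
        exact (append_lt_append_iff' p).2 (List.Lex.rel hxy)
      -- the stopping condition for the ascent
      have hstop : ∀ r', r' < d → ∀ c : ℕ+,
          v.take (v.length - r') ++ [c] ∈ t → v.take (v.length - r') ++ [c] ≤ v := by
        intro r' hr' c hct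
        rcases Nat.eq_zero_or_pos r' with rfl | hr'pos
        · rw [Nat.sub_zero, List.take_length] at hct
          exact absurd hct (hchild c)
        · by_contra hle
          have hgt : v < v.take (v.length - r') ++ [c] := not_le.mp hle
          have hsm := (lexVertex_succ_min hi hct hgt).2
          rw [hvi1] at hsm
          rw [htakemid (v.length - r') (by omega)] at hsm
          have hra : (p ++ x :: r.take (v.length - r' - p.length - 1)) ++ [c]
              = p ++ x :: (r.take (v.length - r' - p.length - 1) ++ [c]) := by simp
          rw [hra] at hsm
          have hlt2 : p ++ x :: (r.take (v.length - r' - p.length - 1) ++ [c]) < p ++ [y] :=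
            (append_lt_append_iff' p).2 (List.Lex.rel hxy)
          exact absurd (lt_of_le_of_lt hsm hlt2) (lt_irrefl _)
      have hasc := ascent ht hi (d := d) (by rw [← hv]; omega) hhead hinv hstop
      obtain ⟨hheadp, hinvp⟩ := hasc d le_rfl
      have hvd : v.length - d = p.length := by omega
      rw [hvd, htakep] at hheadp
      -- the descent step into v (i+1) = p ++ [y]
      set m' : ℕ := jIdx t i + d with hm'
      have hq : p ++ [y] ∈ t := by rw [← hvi1]; exact lexVertex_mem hi1
      have hqnv : p ++ [y] ∉ contourHist t m' := by
        rw [hinvp]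
        rintro ⟨-, hle⟩
        exact absurd hle (not_le.mpr hlt1)
      have hymem : theta t m' ++ [y.natPred.succPNat] ∈ t ∧
          theta t m' ++ [y.natPred.succPNat] ∉ contourHist t m' := by
        rw [hheadp, PNat.succPNat_natPred]
        exact ⟨hq, hqnv⟩
      have hpos : ∃ k : ℕ, theta t m' ++ [k.succPNat] ∈ t ∧
          theta t m' ++ [k.succPNat] ∉ contourHist t m' := ⟨y.natPred, hymem⟩
      set S : Set ℕ := {k : ℕ | theta t m' ++ [k.succPNat] ∈ t ∧
          theta t m' ++ [k.succPNat] ∉ contourHist t m'} with hS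
      have hymem' : y.natPred ∈ S := hymem
      have hinf : sInf S = y.natPred := by
        apply le_antisymm (Nat.sInf_le hymem')
        by_contra hcon
        push_neg at hcon
        have hmem2 := Nat.sInf_mem (⟨y.natPred, hymem'⟩ : S.Nonempty)
        set k0 := sInf S
        obtain ⟨hk0t, hk0v⟩ := hmem2
        rw [hheadp] at hk0t hk0v
        have hzy : k0.succPNat < y := by
          have h1 : (k0.succPNat : ℕ) = k0 + 1 := rfl
          have h2 : (y.natPred : ℕ) = (y : ℕ) - 1 := rfl
          have := y.one_le
          rw [← PNat.coe_lt_coe, h1]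
          omega
        have := hmin _ hzy hk0t
        apply hk0v
        rw [hinvp]
        exact ⟨hk0t, this⟩
      have hstep := contourHist_succ_pos hpos
      rw [hinf, hheadp, PNat.succPNat_natPred] at hstep
      have hj1 : jIdx t (i + 1) = m' + 1 := by
        rw [jIdx_eq hi1, hvi1, hm', hjv]
        simp only [List.length_append, List.length_cons, List.length_nil]
        omega
      have hth : theta t (jIdx t (i + 1)) = lexVertex t (i + 1) := by
        rw [hj1, theta, hstep, List.headI_cons, hvi1]
      refine ⟨hth, ?_, ?_⟩
      · intro w
        rw [hj1, hstep, List.mem_cons, ← succ_mem_iff hi1 w, hvi1, hinvp]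
      · intro j hj'
        rcases Nat.lt_or_ge j (jIdx t i + 1) with h' | h'
        · exact hintree j (by omega)
        · rcases Nat.lt_or_ge j (jIdx t (i + 1)) with h'' | h''
          · -- j = jIdx t i + r'' with 1 ≤ r'' ≤ d
            obtain ⟨r'', rfl⟩ : ∃ r'', j = jIdx t i + r'' :=
              ⟨j - jIdx t i, by omega⟩
            have hr''d : r'' ≤ d := by omega
            have := (hasc r'' hr''d).1
            rw [this]
            exact ht.2.1 _ (lexVertex_mem hi) _ (List.take_prefix _ _)
          · have : j = jIdx t (i + 1) := le_antisymm hj' h''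
            subst this
            rw [hth]
            exact lexVertex_mem hi1

/-! ### Final stretch of the contour -/

lemma final_stretch {t : Finset Vertex} (ht : IsPlaneTreeSet t) (hn : 1 ≤ t.card) :
    ∀ r ≤ (lexVertex t (t.card - 1)).length,
      theta t (jIdx t (t.card - 1) + r) =
        (lexVertex t (t.card - 1)).take ((lexVertex t (t.card - 1)).length - r) := by
  have hi : t.card - 1 < t.card := by omega
  obtain ⟨hhead, hinv, -⟩ := main_inv ht (t.card - 1) hi
  have hstop : ∀ r, r < (lexVertex t (t.card - 1)).length → ∀ c : ℕ+,
      (lexVertex t (t.card - 1)).take ((lexVertex t (t.card - 1)).length - r) ++ [c] ∈ t →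
      (lexVertex t (t.card - 1)).take ((lexVertex t (t.card - 1)).length - r) ++ [c]
        ≤ lexVertex t (t.card - 1) := by
    intro r _ c hc
    exact le_lexVertex_max hc
  intro r hr
  exact (ascent ht hi le_rfl hhead hinv hstop r hr).1

lemma jIdx_last {t : Finset Vertex} (ht : IsPlaneTreeSet t) (hn : 1 ≤ t.card) :
    jIdx t (t.card - 1) + (lexVertex t (t.card - 1)).length = 2 * t.card - 2 := by
  have hi : t.card - 1 < t.card := by omega
  have h1 := lexVertex_length_le ht hi
  rw [jIdx_eq hi]
  omega

lemma theta_last {t : Finset Vertex} (ht : IsPlaneTreeSet t) (hn : 1 ≤ t.card) :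
    theta t (2 * t.card - 2) = [] := by
  have := final_stretch ht hn (lexVertex t (t.card - 1)).length le_rfl
  rw [jIdx_last ht hn] at this
  rw [this]
  simp

lemma theta_in_tree {t : Finset Vertex} (ht : IsPlaneTreeSet t) (hn : 1 ≤ t.card) :
    ∀ j, j ≤ 2 * t.card - 2 → theta t j ∈ t := by
  intro j hj
  have hi : t.card - 1 < t.card := by omega
  obtain ⟨-, -, hintree⟩ := main_inv ht (t.card - 1) hi
  rcases Nat.lt_or_ge j (jIdx t (t.card - 1)) with h' | h'
  · exact hintree j (le_of_lt h')
  · obtain ⟨r, rfl⟩ : ∃ r, j = jIdx t (t.card - 1) + r := ⟨j - jIdx t (t.card - 1), by omega⟩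
    have hjl := jIdx_last ht hn
    have hr : r ≤ (lexVertex t (t.card - 1)).length := by omega
    rw [final_stretch ht hn r hr]
    exact ht.2.1 _ (lexVertex_mem hi) _ (List.take_prefix _ _)

/-! ### Interpolation lemmas -/

lemma interpFun_at_nat {n : ℕ} (hn : n ≠ 0) (f : ℕ → ℝ) {i : ℕ} (hi : i ≤ n) :
    interpFun n f ((i : ℝ) / n) = f i := by
  unfold interpFun
  have hmul : (i : ℝ) / n * n = i := by
    field_simp
  have hterm : ∀ k ∈ Finset.range n,
      (f (k + 1) - f k) * max 0 (min 1 ((i : ℝ) / n * n - k)) =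
        if k < i then f (k + 1) - f k else 0 := by
    intro k _
    rw [hmul]
    rcases Nat.lt_or_ge k i with h | h
    · have h1 : (1 : ℝ) ≤ (i : ℝ) - k := by
        have : (k : ℝ) + 1 ≤ i := by exact_mod_cast h
        linarith
      rw [min_eq_left h1, max_eq_right zero_le_one, if_pos h, mul_one]
    · have h1 : (i : ℝ) - k ≤ 0 := by
        have : (i : ℝ) ≤ k := by exact_mod_cast h
        linarith
      rw [min_eq_right (le_trans h1 zero_le_one), max_eq_left h1, if_neg (not_lt.mpr h),
        mul_zero]
  rw [Finset.sum_congr rfl hterm, ← Finset.sum_filter]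
  have hfil : (Finset.range n).filter (fun k => k < i) = Finset.range i := by
    ext k
    simp only [Finset.mem_filter, Finset.mem_range]
    omega
  rw [hfil, Finset.sum_range_sub (fun k => f k) i]
  ring

lemma interpFun_convex {n : ℕ} (hn : 1 ≤ n) (f : ℕ → ℝ) {s : ℝ} (h0 : 0 ≤ s) (h1 : s ≤ 1) :
    ∃ i : ℕ, i < n ∧ (i : ℝ) ≤ s * n ∧ s * n ≤ i + 1 ∧
      ∃ c : ℝ, 0 ≤ c ∧ c ≤ 1 ∧ interpFun n f s = (1 - c) * f i + c * f (i + 1) := by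
  have hsn0 : 0 ≤ s * n := mul_nonneg h0 (by positivity)
  have hsnn : s * n ≤ n := by
    calc s * n ≤ 1 * n := mul_le_mul_of_nonneg_right h1 (Nat.cast_nonneg n)
    _ = n := one_mul _
  set i : ℕ := min (n - 1) ⌊s * n⌋₊ with hidef
  have hin : i < n := by
    have : i ≤ n - 1 := min_le_left _ _
    omega
  have hile : (i : ℝ) ≤ s * n := by
    have h2 : (⌊s * n⌋₊ : ℝ) ≤ s * n := Nat.floor_le hsn0
    have h3 : (i : ℕ) ≤ ⌊s * n⌋₊ := min_le_right _ _
    calc (i : ℝ) ≤ (⌊s * n⌋₊ : ℝ) := by exact_mod_cast h3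
    _ ≤ s * n := h2
  have hsle : s * n ≤ (i : ℝ) + 1 := by
    rcases le_or_gt ⌊s * n⌋₊ (n - 1) with h | h
    · have : i = ⌊s * n⌋₊ := by omega
      rw [this]
      exact le_of_lt (Nat.lt_floor_add_one _)
    · have hieq : i = n - 1 := by omega
      have : (i : ℝ) + 1 = (n : ℝ) := by
        rw [hieq]
        have : ((n - 1 : ℕ) : ℝ) = (n : ℝ) - 1 := by
          rw [Nat.cast_sub hn]
          simp
        rw [this]
        ring
      rw [this]
      exact hsnn
  refine ⟨i, hin, hile, hsle, s * n - i, by linarith, by linarith, ?_⟩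
  unfold interpFun
  have hterm : ∀ k ∈ Finset.range n,
      (f (k + 1) - f k) * max 0 (min 1 (s * n - k)) =
        if k < i then f (k + 1) - f k
        else if k = i then (f (k + 1) - f k) * (s * n - i) else 0 := by
    intro k _
    rcases Nat.lt_or_ge k i with h | h
    · have h1 : (1 : ℝ) ≤ s * n - k := by
        have : (k : ℝ) + 1 ≤ i := by exact_mod_cast h
        linarith
      rw [min_eq_left h1, max_eq_right zero_le_one, if_pos h, mul_one]
    · rcases Nat.eq_or_lt_of_le h with heq | hlt
      · subst heq
        rw [if_neg (lt_irrefl i), if_pos rfl]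
        have h1 : s * n - (i : ℝ) ≤ 1 := by linarith
        have h2 : 0 ≤ s * n - (i : ℝ) := by linarith
        rw [min_eq_right h1, max_eq_right h2]
      · have h1 : s * n - (k : ℝ) ≤ 0 := by
          have : (i : ℝ) + 1 ≤ k := by exact_mod_cast hlt
          linarith
        rw [min_eq_right (le_trans h1 zero_le_one), max_eq_left h1,
          if_neg (by omega), if_neg (by omega), mul_zero]
  rw [Finset.sum_congr rfl hterm]
  have hsplit : ∀ k ∈ Finset.range n,
      (if k < i then f (k + 1) - f k
        else if k = i then (f (k + 1) - f k) * (s * n - i) else 0) =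
      (if k < i then f (k + 1) - f k else 0) +
        (if k = i then (f (k + 1) - f k) * (s * n - i) else 0) := by
    intro k _
    by_cases h1 : k < i
    · rw [if_pos h1, if_pos h1, if_neg (by omega), add_zero]
    · rw [if_neg h1, if_neg h1, zero_add]
  rw [Finset.sum_congr rfl hsplit, Finset.sum_add_distrib, ← Finset.sum_filter,
    ← Finset.sum_filter]
  have hfil : (Finset.range n).filter (fun k => k < i) = Finset.range i := by
    ext k
    simp only [Finset.mem_filter, Finset.mem_range]
    omega
  have hfil2 : (Finset.range n).filter (fun k => k = i) = {i} := by
    ext k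
    simp only [Finset.mem_filter, Finset.mem_range, Finset.mem_singleton]
    omega
  rw [hfil, hfil2, Finset.sum_singleton, Finset.sum_range_sub (fun k => f k) i]
  ring

/-! ### Assembly lemmas -/

lemma abs_convex {a b z c : ℝ} (h0 : 0 ≤ c) (h1 : c ≤ 1) :
    |(1 - c) * a + c * b - z| ≤ max |a - z| |b - z| := by
  have heq : (1 - c) * a + c * b - z = (1 - c) * (a - z) + c * (b - z) := by ring
  rw [heq]
  calc |(1 - c) * (a - z) + c * (b - z)| ≤ |(1 - c) * (a - z)| + |c * (b - z)| := abs_add_le _ _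
  _ = (1 - c) * |a - z| + c * |b - z| := by
      rw [abs_mul, abs_mul, abs_of_nonneg (by linarith : (0:ℝ) ≤ 1 - c), abs_of_nonneg h0]
  _ ≤ (1 - c) * max |a - z| |b - z| + c * max |a - z| |b - z| := by
      exact add_le_add (mul_le_mul_of_nonneg_left (le_max_left _ _) (by linarith))
        (mul_le_mul_of_nonneg_left (le_max_right _ _) h0)
  _ = max |a - z| |b - z| := by ring

lemma jIdx_ge_card {t : Finset Vertex} {i : ℕ} (hi : t.card ≤ i) :
    jIdx t i = 2 * t.card - 2 := if_neg (not_lt.mpr hi)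

lemma jIdx_succ_le {t : Finset Vertex} (ht : IsPlaneTreeSet t) {i : ℕ} (hi : i < t.card) :
    jIdx t (i + 1) ≤ jIdx t i + 2 + treeDist (lexVertex t i) (lexVertex t (i + 1)) := by
  have hjv : jIdx t i = 2 * i - (lexVertex t i).length := jIdx_eq hi
  have hlen : (lexVertex t i).length ≤ i := lexVertex_length_le ht hi
  rcases Nat.lt_or_ge (i + 1) t.card with hi1 | hi1
  · have hjv1 : jIdx t (i + 1) = 2 * (i + 1) - (lexVertex t (i + 1)).length := jIdx_eq hi1
    have hlen1 : (lexVertex t (i + 1)).length ≤ i + 1 := lexVertex_length_le ht hi1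
    have hlcp1 := lcpLen_le_right (lexVertex t i) (lexVertex t (i + 1))
    have hlcp2 := lcpLen_le_left (lexVertex t i) (lexVertex t (i + 1))
    simp only [treeDist]
    omega
  · have hjv1 : jIdx t (i + 1) = 2 * t.card - 2 := jIdx_ge_card hi1
    have hcard : i + 1 = t.card := le_antisymm hi hi1
    have hnil : lexVertex t (i + 1) = [] := lexVertex_default hi1
    rw [hnil, treeDist_nil]
    omega

lemma labelOf_nil {S : Type*} (T : MTree S) : labelOf T [] = 0 := by
  simp [labelOf]


/-- equation (3.2) in the proof of Proposition 3.7. With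
`α_t = 2 + max_{0 ≤ i < |t|} dist_t(v_i, v_{i+1})`,
`sup_{0 ≤ s ≤ 1} |Z_t(s) - S_t(φ_t(s))| ≤ max{|ℓ(u) - ℓ(v)| : u, v ∈ V(t), dist_t(u,v) ≤ α_t}`. -/
theorem statement17 {S : Type*} (T : MTree S) (hT : T.IsPlaneTree) :
    ∀ s ∈ Set.Icc (0:ℝ) 1,
      |labelFun T s - lexLabelFun T (phi T.verts s)|
        ≤ sSup {x : ℝ | ∃ u ∈ T.verts, ∃ v ∈ T.verts,
            treeDist u v ≤ 2 + ((Finset.range T.verts.card).sup fun i =>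
              treeDist (lexVertex T.verts i) (lexVertex T.verts (i + 1)))
            ∧ x = |labelOf T u - labelOf T v|} := by
  intro s hs
  obtain ⟨hs0, hs1⟩ := hs
  have ht : IsPlaneTreeSet T.verts := hT
  set t := T.verts with htdef
  have hn1 : 1 ≤ t.card := Finset.card_pos.mpr ⟨[], ht.1⟩
  set M : ℕ := (Finset.range t.card).sup
    (fun i => treeDist (lexVertex t i) (lexVertex t (i + 1))) with hM
  set D : Set ℝ := {x : ℝ | ∃ u ∈ t, ∃ v ∈ t,
    treeDist u v ≤ 2 + M ∧ x = |labelOf T u - labelOf T v|} with hD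
  have hbdd : BddAbove D := by
    apply Set.Finite.bddAbove
    apply Set.Finite.subset (Set.Finite.image
      (fun p : Vertex × Vertex => |labelOf T p.1 - labelOf T p.2|) (t ×ˢ t).finite_toSet)
    rintro x ⟨u, hu, v, hv, -, rfl⟩
    exact ⟨(u, v), by simp [hu, hv], rfl⟩
  have hmemD : ∀ u v : Vertex, u ∈ t → v ∈ t → treeDist u v ≤ 2 + M →
      |labelOf T u - labelOf T v| ≤ sSup D := by
    intro u v hu hv hduv
    exact le_csSup hbdd ⟨u, hu, v, hv, hduv, rfl⟩
  set A : Set ℕ := {i : ℕ | i ≤ t.card ∧ (jIdx t i : ℝ) ≤ s * (2 * t.card - 2)} with hA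
  have hAbdd : BddAbove A := ⟨t.card, fun x hx => hx.1⟩
  have hphi : phi t s = ((sSup A : ℕ) : ℝ) / t.card := rfl
  rcases eq_or_lt_of_le hn1 with hcard1 | hcard2
  · -- the one-vertex case
    have hc : t.card = 1 := hcard1.symm
    have hlf : labelFun T s = 0 := by
      have h0 : labelFun T s = interpFun (2 * t.card - 2) (fun i => labelOf T (theta t i)) s :=
        rfl
      rw [h0, hc]
      norm_num
      simp [interpFun, theta, contourHist, labelOf]
    have h1A : 1 ∈ A := by
      refine ⟨by omega, ?_⟩
      rw [jIdx_ge_card (by omega), hc]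
      norm_num
    have hsup1 : sSup A = 1 := by
      apply le_antisymm
      · exact (Nat.sSup_mem ⟨1, h1A⟩ hAbdd).1.trans (by omega)
      · exact le_csSup hAbdd h1A
    have hphi1 : phi t s = 1 := by
      rw [hphi, hsup1, hc]
      norm_num
    have hll : lexLabelFun T (phi t s) = 0 := by
      rw [hphi1]
      have h1 : (1 : ℝ) = ((1 : ℕ) : ℝ) / (t.card : ℝ) := by rw [hc]; norm_num
      have h0 : lexLabelFun T (((1 : ℕ) : ℝ) / (t.card : ℝ))
          = interpFun t.card (fun i => labelOf T (lexVertex t i))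
            (((1 : ℕ) : ℝ) / (t.card : ℝ)) := rfl
      rw [h1, h0, interpFun_at_nat (by omega) _ (by omega : 1 ≤ t.card)]
      rw [lexVertex_default (by omega), labelOf_nil]
    rw [hlf, hll]
    simpa using hmemD [] [] ht.1 ht.1 (by rw [treeDist_self]; omega)
  · -- the general case
    have hn2 : 2 ≤ t.card := hcard2
    set N : ℕ := 2 * t.card - 2 with hN
    have hN1 : 1 ≤ N := by omega
    have hNr : ((N : ℕ) : ℝ) = 2 * (t.card : ℝ) - 2 := by
      rw [hN, Nat.cast_sub (by omega : 2 ≤ 2 * t.card)]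
      push_cast
      ring
    have hcast : s * ((N : ℕ) : ℝ) = s * (2 * (t.card : ℝ) - 2) := by rw [hNr]
    have h0A : 0 ∈ A := by
      refine ⟨Nat.zero_le _, ?_⟩
      have hj0 : jIdx t 0 = 0 := by rw [jIdx_eq (by omega)]; omega
      rw [hj0]
      have h2 : (2 : ℝ) ≤ (t.card : ℝ) := by exact_mod_cast hn2
      have : (0 : ℝ) ≤ 2 * (t.card : ℝ) - 2 := by linarith
      rw [Nat.cast_zero]
      exact mul_nonneg hs0 this
    set istar := sSup A with histar
    obtain ⟨histarle, histarj⟩ := Nat.sSup_mem ⟨0, h0A⟩ hAbdd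
    have hlex : lexLabelFun T (phi t s) = labelOf T (lexVertex t istar) := by
      rw [hphi]
      have h0 : lexLabelFun T ((istar : ℝ) / (t.card : ℝ))
          = interpFun t.card (fun i => labelOf T (lexVertex t i))
            ((istar : ℝ) / (t.card : ℝ)) := rfl
      rw [h0, interpFun_at_nat (by omega) _ histarle]
    obtain ⟨i, hiN, hile, hsle, c, hc0, hc1, hval⟩ :=
      interpFun_convex hN1 (fun i => labelOf T (theta t i)) hs0 hs1
    have hlfun : labelFun T s
        = (1 - c) * labelOf T (theta t i) + c * labelOf T (theta t (i + 1)) := by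
      have h0 : labelFun T s = interpFun N (fun i => labelOf T (theta t i)) s := rfl
      rw [h0, hval]
    have hjile : (jIdx t istar : ℝ) ≤ (i : ℝ) + 1 := by
      calc (jIdx t istar : ℝ) ≤ s * (2 * (t.card : ℝ) - 2) := histarj
      _ = s * ((N : ℕ) : ℝ) := hcast.symm
      _ ≤ (i : ℝ) + 1 := hsle
    have hjle : jIdx t istar ≤ i + 1 := by exact_mod_cast hjile
    have hvmem : lexVertex t istar ∈ t := by
      rcases Nat.lt_or_ge istar t.card with h | h
      · exact lexVertex_mem h
      · rw [lexVertex_default h]; exact ht.1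
    have hth : theta t (jIdx t istar) = lexVertex t istar := by
      rcases Nat.lt_or_ge istar t.card with h | h
      · exact (main_inv ht istar h).1
      · have h1 : istar = t.card := le_antisymm histarle h
        rw [lexVertex_default h, h1, jIdx_ge_card le_rfl, ← hN]
        exact theta_last ht (by omega)
    have hfact : i + 1 ≤ jIdx t istar + 2 + M := by
      rcases Nat.lt_or_ge istar t.card with hlt | hge
      · have hnotA : (istar + 1) ∉ A := by
          intro hmem'
          have := le_csSup hAbdd hmem'
          omega
        have hj' : s * (2 * (t.card : ℝ) - 2) < (jIdx t (istar + 1) : ℝ) := by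
          by_contra hcon
          push_neg at hcon
          exact hnotA ⟨by omega, hcon⟩
        have hij' : (i : ℝ) < (jIdx t (istar + 1) : ℝ) :=
          lt_of_le_of_lt (hile.trans (le_of_eq hcast)) hj'
        have hij'' : i < jIdx t (istar + 1) := by exact_mod_cast hij'
        have hsucc := jIdx_succ_le ht hlt
        have hMb : treeDist (lexVertex t istar) (lexVertex t (istar + 1)) ≤ M := by
          rw [hM]
          exact Finset.le_sup (f := fun i => treeDist (lexVertex t i) (lexVertex t (i + 1)))
            (Finset.mem_range.mpr hlt)
        omega
      · have h1 : istar = t.card := le_antisymm histarle hge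
        have hjN : jIdx t istar = N := by rw [h1, jIdx_ge_card le_rfl, ← hN]
        omega
    have hkey : ∀ a : ℕ, a = i ∨ a = i + 1 → treeDist (theta t a) (lexVertex t istar) ≤ 2 + M := by
      intro a ha
      rw [← hth]
      rcases le_total a (jIdx t istar) with hab | hab
      · exact le_trans (treeDist_theta_le t hab) (by omega)
      · rw [treeDist_comm]
        exact le_trans (treeDist_theta_le t hab) (by omega)
    have hu1 : theta t i ∈ t := theta_in_tree ht (by omega) i (by omega)
    have hu2 : theta t (i + 1) ∈ t := theta_in_tree ht (by omega) (i + 1) (by omega)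
    have hb1 := hmemD _ _ hu1 hvmem (hkey i (Or.inl rfl))
    have hb2 := hmemD _ _ hu2 hvmem (hkey (i + 1) (Or.inr rfl))
    rw [hlfun, hlex]
    exact le_trans (abs_convex hc0 hc1) (max_le hb1 hb2)


end TreeSym
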